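/- Let p > 1 and q = p/(p-1). The function f_p(z) = (z(1+1/z)^{1/q} - z)^{p-1} - (z - z(1-1/z)^{1/q})^{p-1} (principal branches) satisfies f_p(z) = -((p-1)/p)^p · (1/z) + O(1/z²) as z → ∞ in ℂ₊ ∪ (1,∞). -/

import Mathlib

open Complex

/-- The function `f_p` in the alternative form valid on `ℂ₊ ∪ (1,∞)`. -/
noncomputable def fpAlt (p q : ℝ) (z : ℂ) : ℂ :=
  (z * (1 + 1 / z) ^ ((1 / q : ℝ) : ℂ) - z) ^ ((p - 1 : ℝ) : ℂ) -
    (z - z * (1 - 1 / z) ^ ((1 / q : ℝ) : ℂ)) ^ ((p - 1 : ℝ) : ℂ)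

private lemma aux_hasDerivAt_G1 (α : ℂ) {w : ℂ} (hw : 1 + w ∈ Complex.slitPlane) :
    HasDerivAt (fun w : ℂ => (1 + w) ^ α - 1) (α * (1 + w) ^ (α - 1)) w := by
  have h := (((hasDerivAt_id w).const_add 1).cpow_const (c := α) hw).sub_const 1
  simpa using h

private lemma aux_hasDerivAt_G2 (α : ℂ) {w : ℂ} (hw : 1 - w ∈ Complex.slitPlane) :
    HasDerivAt (fun w : ℂ => 1 - (1 - w) ^ α) (α * (1 - w) ^ (α - 1)) w := by
  have h := (((hasDerivAt_id w).const_sub 1).cpow_const (c := α) hw).const_sub 1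
  simpa using h

private lemma aux_slit1 : ∀ᶠ w : ℂ in nhds 0, 1 + w ∈ Complex.slitPlane := by
  have hc : ContinuousAt (fun w : ℂ => 1 + w) 0 := by fun_prop
  exact hc.eventually_mem (Complex.isOpen_slitPlane.mem_nhds (by
    simpa using Complex.one_mem_slitPlane))

private lemma aux_slit2 : ∀ᶠ w : ℂ in nhds 0, 1 - w ∈ Complex.slitPlane := by
  have hc : ContinuousAt (fun w : ℂ => 1 - w) 0 := by fun_prop
  exact hc.eventually_mem (Complex.isOpen_slitPlane.mem_nhds (by
    simpa using Complex.one_mem_slitPlane))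

private lemma aux_deriv2_G1 (α : ℂ) :
    deriv (deriv (fun w : ℂ => (1 + w) ^ α - 1)) 0 = α * (α - 1) := by
  have hEv : deriv (fun w : ℂ => (1 + w) ^ α - 1)
      =ᶠ[nhds (0:ℂ)] fun w => α * (1 + w) ^ (α - 1) := by
    filter_upwards [aux_slit1] with w hw
    exact (aux_hasDerivAt_G1 α hw).deriv
  rw [hEv.deriv_eq]
  have h1 : (1 : ℂ) + 0 ∈ Complex.slitPlane := by simpa using Complex.one_mem_slitPlane
  have h := ((((hasDerivAt_id (0:ℂ)).const_add 1).cpow_const (c := α - 1) h1).const_mul α).deriv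
  simpa [Complex.one_cpow] using h

private lemma aux_deriv2_G2 (α : ℂ) :
    deriv (deriv (fun w : ℂ => 1 - (1 - w) ^ α)) 0 = -(α * (α - 1)) := by
  have hEv : deriv (fun w : ℂ => 1 - (1 - w) ^ α)
      =ᶠ[nhds (0:ℂ)] fun w => α * (1 - w) ^ (α - 1) := by
    filter_upwards [aux_slit2] with w hw
    exact (aux_hasDerivAt_G2 α hw).deriv
  rw [hEv.deriv_eq]
  have h1 : (1 : ℂ) - 0 ∈ Complex.slitPlane := by simpa using Complex.one_mem_slitPlane
  have h0 := (((hasDerivAt_id' (x := (0:ℂ))).const_sub 1).cpow_const (c := α - 1) h1).const_mul α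
  have h0' : deriv (fun w : ℂ => α * (1 - w) ^ (α - 1)) 0
      = α * ((α - 1) * ((1:ℂ) - 0) ^ (α - 1 - 1) * -1) := h0.deriv
  rw [h0', sub_zero, Complex.one_cpow]
  ring

/-- If `G` is analytic at `0`, then `deriv (dslope G 0) 0 = (deriv (deriv G) 0) / 2`. -/
private lemma aux_deriv_dslope {G : ℂ → ℂ} (hG : AnalyticAt ℂ G 0) :
    deriv (dslope G 0) 0 = deriv (deriv G) 0 / 2 := by
  obtain ⟨P, hP⟩ := hG
  have hd : HasFPowerSeriesAt (dslope G 0) P.fslope 0 := hP.has_fpower_series_dslope_fslope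
  have h1 : deriv (dslope G 0) 0 = P.fslope.coeff 1 := by
    have := hd.deriv
    simpa [FormalMultilinearSeries.apply_eq_pow_smul_coeff] using this
  rw [h1, FormalMultilinearSeries.coeff_fslope]
  obtain ⟨r, hr⟩ := hP
  have h2 := hr.factorial_smul (1 : ℂ) 2
  have h3 : deriv (deriv G) 0 = iteratedFDeriv ℂ 2 G 0 (fun _ => 1) := by
    rw [← iteratedDeriv_eq_iteratedFDeriv,
      show (2:ℕ) = 1 + 1 from rfl, iteratedDeriv_succ, iteratedDeriv_one]
  have h4 : P 2 (fun _ => (1:ℂ)) = P.coeff 2 := by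
    simp [FormalMultilinearSeries.apply_eq_pow_smul_coeff]
  rw [h4] at h2
  rw [h3, ← h2]
  simp [nsmul_eq_mul, Nat.factorial]

theorem stmt_10 (p : ℝ) (hp : 1 < p) (q : ℝ) (hq : q = p / (p - 1)) :
    ∃ C > (0 : ℝ), ∃ R > (0 : ℝ), ∀ z : ℂ,
      (0 < z.im ∨ (z.im = 0 ∧ 1 < z.re)) → R < ‖z‖ →
      ‖fpAlt p q z + (((p - 1) / p) ^ p : ℝ) / z‖ ≤ C / (‖z‖) ^ 2 := by
  have hp0 : (0:ℝ) < p := lt_trans one_pos hp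
  have hp1 : (0:ℝ) < p - 1 := by linarith
  set c : ℝ := (p - 1) / p with hcdef
  have hc0 : 0 < c := div_pos hp1 hp0
  have hq' : 1 / q = c := by rw [hq, one_div_div]
  set α : ℂ := ((1 / q : ℝ) : ℂ) with hαdef
  set ρ : ℂ := ((p - 1 : ℝ) : ℂ) with hρdef
  have hαc : α = (c : ℂ) := by rw [hαdef, hq']
  set G₁ : ℂ → ℂ := fun w => (1 + w) ^ α - 1 with hG₁def
  set G₂ : ℂ → ℂ := fun w => 1 - (1 - w) ^ α with hG₂def
  set A : ℂ → ℂ := dslope G₁ 0 with hAdef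
  set B : ℂ → ℂ := dslope G₂ 0 with hBdef
  set F : ℂ → ℂ := fun w => A w ^ ρ - B w ^ ρ with hFdef
  have h1slit : (1:ℂ) ∈ Complex.slitPlane := Complex.one_mem_slitPlane
  have hG₁a : AnalyticAt ℂ G₁ 0 := by
    apply AnalyticAt.sub _ analyticAt_const
    exact (analyticAt_const.add analyticAt_id).cpow analyticAt_const (by simpa using h1slit)
  have hG₂a : AnalyticAt ℂ G₂ 0 := by
    apply AnalyticAt.sub analyticAt_const
    exact (analyticAt_const.sub analyticAt_id).cpow analyticAt_const (by simpa using h1slit)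
  have hAa : AnalyticAt ℂ A 0 := by
    obtain ⟨P, hP⟩ := hG₁a
    exact ⟨P.fslope, hP.has_fpower_series_dslope_fslope⟩
  have hBa : AnalyticAt ℂ B 0 := by
    obtain ⟨P, hP⟩ := hG₂a
    exact ⟨P.fslope, hP.has_fpower_series_dslope_fslope⟩
  have hA0 : A 0 = α := by
    rw [hAdef, dslope_same]
    have h := (aux_hasDerivAt_G1 α (w := 0) (by simpa using h1slit)).deriv
    rw [hG₁def, h]
    simp [Complex.one_cpow]
  have hB0 : B 0 = α := by
    rw [hBdef, dslope_same]
    have h := (aux_hasDerivAt_G2 α (w := 0) (by simpa using h1slit)).deriv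
    rw [hG₂def, h]
    simp [Complex.one_cpow]
  have hA' : deriv A 0 = α * (α - 1) / 2 := by
    rw [hAdef, aux_deriv_dslope hG₁a, hG₁def, aux_deriv2_G1]
  have hB' : deriv B 0 = -(α * (α - 1)) / 2 := by
    rw [hBdef, aux_deriv_dslope hG₂a, hG₂def, aux_deriv2_G2]
  have hαslit : α ∈ Complex.slitPlane := by
    rw [hαc]; exact Complex.mem_slitPlane_iff.2 (Or.inl (by simpa using hc0))
  have hα0 : α ≠ 0 := Complex.slitPlane_ne_zero hαslit
  have hFa : AnalyticAt ℂ F 0 := by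
    apply AnalyticAt.sub
    · exact hAa.cpow analyticAt_const (by rw [hA0]; exact hαslit)
    · exact hBa.cpow analyticAt_const (by rw [hB0]; exact hαslit)
  have hF0 : F 0 = 0 := by rw [hFdef]; simp [hA0, hB0]
  have hdF : HasDerivAt F (ρ * A 0 ^ (ρ - 1) * deriv A 0 - ρ * B 0 ^ (ρ - 1) * deriv B 0) 0 := by
    apply HasDerivAt.sub
    · exact (hAa.differentiableAt.hasDerivAt).cpow_const (by rw [hA0]; exact hαslit)
    · exact (hBa.differentiableAt.hasDerivAt).cpow_const (by rw [hB0]; exact hαslit)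
  set K : ℝ := ((p - 1) / p) ^ p with hKdef
  have hKc : K = c ^ p := by rw [hKdef]
  have hderivF : deriv F 0 = -(K : ℂ) := by
    rw [hdF.deriv, hA0, hB0, hA', hB']
    have hstep : ρ * α ^ (ρ - 1) * (α * (α - 1) / 2) - ρ * α ^ (ρ - 1) * (-(α * (α - 1)) / 2)
        = ρ * (α - 1) * (α ^ (ρ - 1) * α) := by ring
    rw [hstep]
    have hpow : α ^ (ρ - 1) * α = α ^ ρ := by
      rw [Complex.cpow_sub _ _ hα0, Complex.cpow_one]
      field_simp
    have hαρ : α ^ ρ = ((c ^ (p - 1) : ℝ) : ℂ) := by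
      rw [hαc, hρdef, Complex.ofReal_cpow hc0.le]
    have hreal : (p - 1) * (c - 1) * (c ^ (p - 1)) = -K := by
      have h1 : K = c ^ (p - 1) * c := by
        rw [hKc, show c ^ p = c ^ (p - 1 + 1) by rw [sub_add_cancel],
          Real.rpow_add hc0, Real.rpow_one]
      have h2 : (p - 1) * (c - 1) = -c := by
        rw [hcdef]; field_simp; all_goals ring
      rw [h1]; linear_combination c ^ (p - 1) * h2
    rw [hpow, hαρ, hαc, hρdef,
      show -((K:ℝ):ℂ) = (((-K) : ℝ) : ℂ) by push_cast; ring, ← hreal]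
    all_goals (push_cast; try ring)
  -- the key identification: fpAlt p q z = F z⁻¹ for z ≠ 0
  have hkey : ∀ z : ℂ, z ≠ 0 → fpAlt p q z = F z⁻¹ := by
    intro z hz
    have hzi : z⁻¹ ≠ (0:ℂ) := inv_ne_zero hz
    have hAz : A z⁻¹ = z * (1 + 1 / z) ^ α - z := by
      rw [hAdef, dslope_of_ne _ hzi, slope_def_field, hG₁def]
      simp only [add_zero, Complex.one_cpow, sub_self, sub_zero, one_div]
      rw [div_inv_eq_mul]
      ring
    have hBz : B z⁻¹ = z - z * (1 - 1 / z) ^ α := by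
      rw [hBdef, dslope_of_ne _ hzi, slope_def_field, hG₂def]
      simp only [sub_zero, Complex.one_cpow, sub_self, one_div]
      rw [div_inv_eq_mul]
      ring
    rw [hFdef]
    show fpAlt p q z = A z⁻¹ ^ ρ - B z⁻¹ ^ ρ
    rw [hAz, hBz, fpAlt, ← hαdef, ← hρdef]
  -- quantitative bound from differentiability of dslope F 0
  obtain ⟨PF, hPF⟩ := hFa
  have hΨ : HasFPowerSeriesAt (dslope F 0) PF.fslope 0 := hPF.has_fpower_series_dslope_fslope
  set Ψ : ℂ → ℂ := dslope F 0 with hΨdef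
  have hΨa : AnalyticAt ℂ Ψ 0 := ⟨_, hΨ⟩
  have hΨ0 : Ψ 0 = -(K : ℂ) := by rw [hΨdef, dslope_same]; exact hderivF
  have hbig : (fun w => Ψ w - Ψ 0) =O[nhds (0:ℂ)] (fun w => w - 0) :=
    hΨa.differentiableAt.hasDerivAt.isBigO_sub
  obtain ⟨C₀, hC₀⟩ := hbig.bound
  rw [Metric.eventually_nhds_iff] at hC₀
  obtain ⟨δ, hδpos, hδ⟩ := hC₀
  set C : ℝ := max C₀ 1 with hCdef
  have hCpos : 0 < C := lt_of_lt_of_le one_pos (le_max_right _ _)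
  refine ⟨C, hCpos, max 1 δ⁻¹, lt_of_lt_of_le one_pos (le_max_left _ _), ?_⟩
  intro z _ hz
  have hz1 : 1 < ‖z‖ := lt_of_le_of_lt (le_max_left _ _) hz
  have hzpos : 0 < ‖z‖ := lt_trans one_pos hz1
  have hz0 : z ≠ 0 := by
    intro h
    rw [h] at hzpos
    simp at hzpos
  have hδz : δ⁻¹ < ‖z‖ := lt_of_le_of_lt (le_max_right 1 δ⁻¹) hz
  have hwδ : (‖z‖)⁻¹ < δ := by
    have := one_div_lt_one_div_of_lt (by positivity : (0:ℝ) < δ⁻¹) hδz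
    simpa [one_div, inv_inv] using this
  have hdist : dist (z⁻¹ : ℂ) 0 < δ := by
    rw [Complex.dist_eq, sub_zero]
    simpa [norm_inv] using hwδ
  have hbound := hδ hdist
  -- `hbound : ‖Ψ z⁻¹ - Ψ 0‖ ≤ C₀ * ‖z⁻¹ - 0‖`
  have hFw : F z⁻¹ = z⁻¹ * Ψ z⁻¹ := by
    have h := sub_smul_dslope F 0 z⁻¹
    rw [← hΨdef] at h
    simp only [sub_zero, smul_eq_mul, hF0] at h
    exact h.symm
  have hEq : fpAlt p q z + ((K : ℝ) : ℂ) / z = z⁻¹ * (Ψ z⁻¹ - Ψ 0) := by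
    rw [hkey z hz0, hFw, hΨ0, div_eq_mul_inv]
    ring
  rw [hEq]
  rw [norm_mul, norm_inv]
  have h1 : ‖Ψ z⁻¹ - Ψ 0‖ ≤ C * (‖z‖)⁻¹ := by
    have h2 : ‖Ψ z⁻¹ - Ψ 0‖ ≤ C₀ * ‖(z⁻¹ : ℂ) - 0‖ := hbound
    have h3 : C₀ * ‖(z⁻¹ : ℂ) - 0‖ ≤ C * (‖z‖)⁻¹ := by
      rw [sub_zero]
      have h4 : ‖(z⁻¹ : ℂ)‖ = (‖z‖)⁻¹ := by
        simp [norm_inv]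
      rw [h4]
      apply mul_le_mul_of_nonneg_right (le_max_left _ _) (by positivity)
    exact le_trans (by simpa using h2) h3
  calc (‖z‖)⁻¹ * ‖Ψ z⁻¹ - Ψ 0‖
      ≤ (‖z‖)⁻¹ * (C * (‖z‖)⁻¹) :=
        mul_le_mul_of_nonneg_left h1 (by positivity)
    _ = C / (‖z‖) ^ 2 := by
        rw [pow_two]
        field_simp
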